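/- Let n ≥ 1 and let N_{ij}^k (for i, j, k ∈ {0,…,n−1}) be nonnegative real numbers. Suppose there exist strictly positive real numbers d_0,…,d_{n−1} satisfying d_i·d_j = Σ_k N_{ij}^k·d_k for all i, j. For each i, let N_i denote the n×n matrix whose (j,k) entry is N_{ij}^k. Then for every i, every complex eigenvalue μ of N_i satisfies |μ| ≤ d_i. -/

import Mathlib

/-- Spectral radius formula: if nonnegative fusion coefficients `N i j k` admit a solution
`d i > 0` of the abelianized fusion rule `d i * d j = ∑ k, N i j k * d k`, then every complex
eigenvalue of the regular-representation matrix `(N_i)_{jk} = N i j k` has absolute value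
at most `d i`. -/
theorem stmt_1 (n : ℕ) (hn : 1 ≤ n) (N : Fin n → Fin n → Fin n → ℝ)
    (hN : ∀ i j k, 0 ≤ N i j k)
    (d : Fin n → ℝ) (hd : ∀ i, 0 < d i)
    (hfus : ∀ i j, d i * d j = ∑ k, N i j k * d k)
    (i : Fin n) (μ : ℂ) (w : Fin n → ℂ) (hw : w ≠ 0)
    (hμ : ((Matrix.of fun j k => N i j k).map (fun a => (a : ℂ))).mulVec w = μ • w) :
    ‖μ‖ ≤ d i := by
  haveI : NeZero n := ⟨Nat.one_le_iff_ne_zero.mp hn⟩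
  set f : Fin n → ℝ := fun k => ‖w k‖ / d k with hf
  obtain ⟨j, -, hj⟩ := Finset.exists_max_image Finset.univ f ⟨0, Finset.mem_univ 0⟩
  have hjmax : ∀ k, f k ≤ f j := fun k => hj k (Finset.mem_univ k)
  -- f j > 0
  have hfj : 0 < f j := by
    obtain ⟨k, hk⟩ : ∃ k, w k ≠ 0 := by
      by_contra h
      push_neg at h
      exact hw (funext h)
    have : 0 < f k := div_pos (by simpa using hk) (hd k)
    exact lt_of_lt_of_le this (hjmax k)
  have hwj : 0 < ‖w j‖ := by
    have h := mul_pos hfj (hd j)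
    rw [hf] at h
    rwa [div_mul_cancel₀ _ (hd j).ne'] at h
  have hrow := congrFun hμ j
  simp only [Matrix.mulVec, dotProduct, Pi.smul_apply, smul_eq_mul, Matrix.map_apply,
    Matrix.of_apply] at hrow
  have key : ‖μ‖ * ‖w j‖ ≤ d i * ‖w j‖ := by
    calc ‖μ‖ * ‖w j‖ = ‖∑ k, (N i j k : ℂ) * w k‖ := by
          rw [← norm_mul, hrow]
      _ ≤ ∑ k, ‖(N i j k : ℂ) * w k‖ := norm_sum_le _ _
      _ = ∑ k, N i j k * ‖w k‖ := by
          refine Finset.sum_congr rfl fun k _ => ?_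
          rw [norm_mul, Complex.norm_real, Real.norm_of_nonneg (hN i j k)]
      _ ≤ ∑ k, N i j k * (f j * d k) := by
          refine Finset.sum_le_sum fun k _ => ?_
          refine mul_le_mul_of_nonneg_left ?_ (hN i j k)
          have := hjmax k
          rw [hf] at this ⊢
          calc ‖w k‖ = ‖w k‖ / d k * d k :=
                (div_mul_cancel₀ _ (hd k).ne').symm
            _ ≤ ‖w j‖ / d j * d k :=
                mul_le_mul_of_nonneg_right this (hd k).le
      _ = f j * ∑ k, N i j k * d k := by
          rw [Finset.mul_sum]; exact Finset.sum_congr rfl fun k _ => by ring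
      _ = f j * (d i * d j) := by rw [hfus]
      _ = (f j * d j) * d i := by ring
      _ = d i * ‖w j‖ := by
          rw [hf]; rw [div_mul_cancel₀ _ (hd j).ne']; ring
  exact le_of_mul_le_mul_right key hwj
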